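/- arXiv:2109.14079 — 3 statements merged into one kernel-verified Lean document; each statement's English description precedes it below -/
import Mathlib

section
/- For every i ∈ {1,…,n}, ‖Ũ_{k,T}((i:n:Tn),:)‖₂² ≤ Σ_{j=1}^k u_j(i)². Consequently, for any probability distribution p on {1,…,n} with p(i) > 0 for all i, the dynamical coherence ν₁(p)² = max_{1≤i≤n} (1/p(i))‖Ũ_{k,T}((i:n:Tn),:)‖₂² is at most the static graph weighted coherence max_{1≤i≤n} (1/p(i)) Σ_{j=1}^k u_j(i)². (Claim made in the remark after Theorem 4.6.) -/
open scoped BigOperators Matrix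

/-- `f_T(λ) = √(Σ_{t=0}^{T-1} λ^{2t})`. -/
noncomputable def fT (T : ℕ) (l : ℝ) : ℝ := Real.sqrt (∑ t ∈ Finset.range T, l ^ (2 * t))

/-- The spectral (ℓ²→ℓ² operator) norm of a real matrix. -/
noncomputable def specNorm {m p : Type*} [Fintype m] [Fintype p] [DecidableEq p]
    (M : Matrix m p ℝ) : ℝ :=
  ‖LinearMap.toContinuousLinearMap (Matrix.toEuclideanLin M)‖

lemma specNorm_sq_le_frob {m p : Type*} [Fintype m] [Fintype p] [DecidableEq p]
    (M : Matrix m p ℝ) : specNorm M ^ 2 ≤ ∑ t, ∑ j, M t j ^ 2 := by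
  have hS : (0:ℝ) ≤ ∑ t, ∑ j, M t j ^ 2 := by positivity
  have h : specNorm M ≤ Real.sqrt (∑ t, ∑ j, M t j ^ 2) := by
    apply ContinuousLinearMap.opNorm_le_bound _ (Real.sqrt_nonneg _)
    intro x
    have hx : (0:ℝ) ≤ ‖x‖ := norm_nonneg _
    rw [← Real.sqrt_sq hx, ← Real.sqrt_mul hS]
    have hnorm : ‖(LinearMap.toContinuousLinearMap (Matrix.toEuclideanLin M)) x‖
        = Real.sqrt (∑ t, (∑ j, M t j * x j) ^ 2) := by
      rw [EuclideanSpace.norm_eq]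
      congr 1
      apply Finset.sum_congr rfl
      intro t _
      rw [Real.norm_eq_abs, sq_abs]
      simp [Matrix.toEuclideanLin_apply, Matrix.mulVec, dotProduct]
    rw [hnorm]
    apply Real.sqrt_le_sqrt
    have hx2 : ‖x‖ ^ 2 = ∑ j, x j ^ 2 := by
      rw [EuclideanSpace.norm_eq, Real.sq_sqrt (by positivity)]
      simp [Real.norm_eq_abs, sq_abs]
    rw [hx2, Finset.sum_mul]
    apply Finset.sum_le_sum
    intro t _
    exact Finset.sum_mul_sq_le_sq_mul_sq _ (fun j => M t j) x
  calc specNorm M ^ 2 ≤ Real.sqrt (∑ t, ∑ j, M t j ^ 2) ^ 2 := by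
        apply pow_le_pow_left₀ (by unfold specNorm; positivity) h
    _ = _ := Real.sq_sqrt hS

/-- remark after Theorem 4.6: for every `i`,
`‖Ũ_{k,T}((i:n:Tn),:)‖₂² ≤ Σ_j u_j(i)²`; consequently, for every positive
probability distribution `p` on `{1,…,n}`, the dynamical coherence
`ν₁(p)² = max_i (1/p(i)) ‖Ũ_{k,T}((i:n:Tn),:)‖₂²` is at most the static graph
weighted coherence `max_i (1/p(i)) Σ_j u_j(i)²`. -/
theorem stmt8 (n k T : ℕ) (hn : 0 < n) (hk : 0 < k) (hT : 0 < T) (hkn : k ≤ n)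
    (u : Fin k → Fin n → ℝ)
    (hu : ∀ i j : Fin k, ∑ a, u i a * u j a = if i = j then 1 else 0)
    (lam : Fin k → ℝ)
    (hmono : ∀ i j : Fin k, i ≤ j → lam j ≤ lam i)
    (hnn : ∀ j, 0 ≤ lam j)
    (sub : Fin n → Matrix (Fin T) (Fin k) ℝ)
    (hsub : ∀ (i : Fin n) (t : Fin T) (j : Fin k),
      sub i t j = lam j ^ (t : ℕ) * u j i / fT T (lam j))
    (p : Fin n → ℝ) (hp : ∀ i, 0 < p i) (hpsum : ∑ i, p i = 1) :
    (∀ i : Fin n, specNorm (sub i) ^ 2 ≤ ∑ j, u j i ^ 2) ∧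
      (⨆ i : Fin n, (p i)⁻¹ * specNorm (sub i) ^ 2)
        ≤ (⨆ i : Fin n, (p i)⁻¹ * ∑ j, u j i ^ 2) := by
  have key : ∀ i : Fin n, specNorm (sub i) ^ 2 ≤ ∑ j, u j i ^ 2 := by
    intro i
    refine (specNorm_sq_le_frob (sub i)).trans_eq ?_
    rw [Finset.sum_comm]
    apply Finset.sum_congr rfl
    intro j _
    have hS1 : (1:ℝ) ≤ ∑ t ∈ Finset.range T, lam j ^ (2 * t) := by
      have := Finset.single_le_sum (f := fun t => lam j ^ (2 * t))
        (fun t _ => pow_nonneg (hnn j) _) (Finset.mem_range.2 hT)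
      simpa using this
    have hS0 : (0:ℝ) < ∑ t ∈ Finset.range T, lam j ^ (2 * t) := lt_of_lt_of_le one_pos hS1
    have hf2 : fT T (lam j) ^ 2 = ∑ t ∈ Finset.range T, lam j ^ (2 * t) :=
      Real.sq_sqrt hS0.le
    calc ∑ t : Fin T, sub i t j ^ 2
        = ∑ t : Fin T, lam j ^ (2 * (t:ℕ)) * (u j i ^ 2 / fT T (lam j) ^ 2) := by
          apply Finset.sum_congr rfl
          intro t _
          rw [hsub]
          rw [div_pow, mul_pow, ← pow_mul, mul_comm (t:ℕ) 2]
          ring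
      _ = (∑ t ∈ Finset.range T, lam j ^ (2 * t)) * (u j i ^ 2 / fT T (lam j) ^ 2) := by
          rw [← Finset.sum_mul]
          congr 1
          exact Fin.sum_univ_eq_sum_range (fun t => lam j ^ (2 * t)) T
      _ = u j i ^ 2 := by
          rw [← hf2]
          have hfne : fT T (lam j) ^ 2 ≠ 0 := by rw [hf2]; exact hS0.ne'
          rw [mul_comm]
          exact div_mul_cancel₀ _ hfne
  refine ⟨key, ?_⟩
  have hne : Nonempty (Fin n) := ⟨⟨0, hn⟩⟩
  apply ciSup_mono
  · exact (Set.finite_range _).bddAbove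
  · intro i
    exact mul_le_mul_of_nonneg_left (key i) (inv_nonneg.2 (hp i).le)
end

section
/- (Theorem 5.1, part (ii), deterministic form.) Let δ ∈ (0,1) and suppose the upper frame bound ‖Φ π_{A,T}(v)‖₂ ≤ √(1+δ) f_T(λ_1) ‖v‖₂ holds for all v ∈ span{u_1,…,u_k}. Let x, x₀ ∈ span{u_1,…,u_k} and define e₀ ∈ ℝ^M by (e₀)_i = (π_{A,T}(x₀))(s(i)) and y ∈ ℝ^M by y_i = (π_{A,T}(x))(s(i)) + (e₀)_i. Then x* = x + x₀ is a minimizer over span{u_1,…,u_k} of x̃ ↦ ‖Φ π_{A,T}(x̃) − D y‖₂ (the objective value at x* is 0), and ‖x* − x‖₂ ≥ (1/(√(1+δ) f_T(λ_1))) ‖D e₀‖₂. -/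
open scoped BigOperators Matrix

/-- Theorem 5.1 (ii), deterministic form. Space-time nodes are pairs
`q = (t,i)`, `(π_{A,T}(x))(q) = (A^{q.1} x)(q.2)`, `(Φ v)_i = d_i v(s(i))` and
`(D e)_i = d_i e_i`.  Suppose the upper frame bound
`‖Φ π_{A,T}(v)‖₂ ≤ √(1+δ) f_T(λ_1) ‖v‖₂` holds on `span{u_1,…,u_k}`.
With `(e₀)_i = (π_{A,T}(x₀))(s(i))` and `y_i = (π_{A,T}(x))(s(i)) + (e₀)_i`,
the vector `x* = x + x₀` has objective value `0` (hence is a minimizer of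
`x̃ ↦ ‖Φ π_{A,T}(x̃) − D y‖₂` over `span{u_1,…,u_k}`) and
`‖x* − x‖₂ ≥ (1/(√(1+δ) f_T(λ_1))) ‖D e₀‖₂`. -/
theorem stmt13 (n k T M : ℕ) (hn : 0 < n) (hk : 0 < k) (hT : 0 < T) (hkn : k ≤ n)
    (hM : 0 < M)
    (u : Fin k → Fin n → ℝ)
    (hu : ∀ i j : Fin k, ∑ a, u i a * u j a = if i = j then 1 else 0)
    (lam : Fin k → ℝ)
    (hmono : ∀ i j : Fin k, i ≤ j → lam j ≤ lam i)
    (hnn : ∀ j, 0 ≤ lam j)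
    (A : Matrix (Fin n) (Fin n) ℝ) (hA : A.IsSymm)
    (heig : ∀ j : Fin k, A.mulVec (u j) = lam j • u j)
    (s : Fin M → Fin T × Fin n) (d : Fin M → ℝ) (hd : ∀ i, 0 < d i)
    (δ : ℝ) (hδ0 : 0 < δ) (hδ1 : δ < 1)
    (hframe : ∀ v ∈ Submodule.span ℝ (Set.range u),
      Real.sqrt (∑ i, (d i * ((A ^ ((s i).1 : ℕ)).mulVec v) (s i).2) ^ 2)
        ≤ Real.sqrt (1 + δ) * fT T (lam ⟨0, hk⟩) * Real.sqrt (∑ a, v a ^ 2))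
    (x : Fin n → ℝ) (hx : x ∈ Submodule.span ℝ (Set.range u))
    (x0 : Fin n → ℝ) (hx0 : x0 ∈ Submodule.span ℝ (Set.range u))
    (e0 : Fin M → ℝ) (he0 : ∀ i, e0 i = ((A ^ ((s i).1 : ℕ)).mulVec x0) (s i).2)
    (y : Fin M → ℝ)
    (hy : ∀ i, y i = ((A ^ ((s i).1 : ℕ)).mulVec x) (s i).2 + e0 i) :
    Real.sqrt (∑ i, (d i * ((A ^ ((s i).1 : ℕ)).mulVec (x + x0)) (s i).2
          - d i * y i) ^ 2) = 0 ∧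
      (∀ z ∈ Submodule.span ℝ (Set.range u),
        Real.sqrt (∑ i, (d i * ((A ^ ((s i).1 : ℕ)).mulVec (x + x0)) (s i).2
              - d i * y i) ^ 2)
          ≤ Real.sqrt (∑ i, (d i * ((A ^ ((s i).1 : ℕ)).mulVec z) (s i).2
              - d i * y i) ^ 2)) ∧
      1 / (Real.sqrt (1 + δ) * fT T (lam ⟨0, hk⟩))
          * Real.sqrt (∑ i, (d i * e0 i) ^ 2)
        ≤ Real.sqrt (∑ a, ((x + x0) a - x a) ^ 2) := by
  have hzero : Real.sqrt (∑ i, (d i * ((A ^ ((s i).1 : ℕ)).mulVec (x + x0)) (s i).2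
      - d i * y i) ^ 2) = 0 := by
    have : ∀ i : Fin M, (d i * ((A ^ ((s i).1 : ℕ)).mulVec (x + x0)) (s i).2
        - d i * y i) ^ 2 = 0 := by
      intro i
      rw [hy i, he0 i, Matrix.mulVec_add]
      simp only [Pi.add_apply]
      ring
    simp [this]
  refine ⟨hzero, fun z _ => by rw [hzero]; exact Real.sqrt_nonneg _, ?_⟩
  have hC : 0 < Real.sqrt (1 + δ) * fT T (lam ⟨0, hk⟩) := by
    apply mul_pos (Real.sqrt_pos.mpr (by linarith))
    unfold fT
    apply Real.sqrt_pos.mpr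
    have : (1:ℝ) ≤ ∑ t ∈ Finset.range T, lam ⟨0, hk⟩ ^ (2 * t) := by
      calc (1:ℝ) = lam ⟨0, hk⟩ ^ (2 * 0) := by simp
      _ ≤ _ := Finset.single_le_sum (f := fun t => lam ⟨0, hk⟩ ^ (2 * t))
          (fun t _ => pow_nonneg (hnn _) _) (Finset.mem_range.mpr hT)
    linarith
  have h1 := hframe x0 hx0
  have h2 : (∑ i, (d i * e0 i) ^ 2)
      = ∑ i, (d i * ((A ^ ((s i).1 : ℕ)).mulVec x0) (s i).2) ^ 2 := by
    congr 1; ext i; rw [he0 i]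
  have h3 : (∑ a, ((x + x0) a - x a) ^ 2) = ∑ a, x0 a ^ 2 := by
    congr 1; ext a; simp
  rw [h2, h3, one_div, ← div_eq_inv_mul, div_le_iff₀ hC, mul_comm]
  exact h1
end

section
/- (Theorem 5.2, bound (5.6), deterministic form.) Under the stated hypotheses, ‖α* − x‖₂ ≤ (1/(√(1−δ) f_T(λ_k))) · (2 + M_max f_T(λ_{k+1})/√(γ g(σ_{k+1}))) · ‖D e‖₂ + (1/(√(1−δ) f_T(λ_k))) · (M_max f_T(λ_{k+1}) √(g(σ_k)/g(σ_{k+1})) + √(γ g(σ_k))) · ‖x‖₂. -/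
open scoped BigOperators Matrix

private lemma fT_nonneg (T : ℕ) (l : ℝ) : 0 ≤ fT T l := Real.sqrt_nonneg _

private lemma fT_pos {T : ℕ} (hT : 0 < T) {l : ℝ} (hl : 0 ≤ l) : 0 < fT T l := by
  have h0 : (0:ℕ) ∈ Finset.range T := Finset.mem_range.mpr hT
  have h1 : (1:ℝ) ≤ ∑ t ∈ Finset.range T, l ^ (2 * t) := by
    have := Finset.single_le_sum (f := fun t => l ^ (2 * t))
      (fun t _ => pow_nonneg hl _) h0
    simpa using this
  unfold fT
  exact Real.sqrt_pos.mpr (by linarith)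

private lemma sum_castLE' {n k : ℕ} (h : k ≤ n) (f : Fin n → ℝ) :
    ∑ j : Fin k, f (Fin.castLE h j) = ∑ j : Fin n, if (j : ℕ) < k then f j else 0 := by
  rw [Finset.sum_ite, Finset.sum_const_zero, add_zero]
  refine Finset.sum_bij' (fun (a : Fin k) _ => Fin.castLE h a)
    (fun (a : Fin n) ha => ⟨(a : ℕ), by simpa using (Finset.mem_filter.mp ha).2⟩)
    (fun a _ => ?_) (fun a _ => Finset.mem_univ _) (fun a _ => rfl)
    (fun a _ => rfl) (fun a _ => rfl)
  simp [Fin.castLE, a.isLt]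

private lemma ip_expand {n : ℕ} (u : Fin n → Fin n → ℝ)
    (hu : ∀ i j : Fin n, ∑ a, u i a * u j a = if i = j then 1 else 0)
    (μ ν : Fin n → ℝ) :
    ∑ a, (∑ j, μ j * u j a) * (∑ j, ν j * u j a) = ∑ j, μ j * ν j := by
  have key : ∀ a : Fin n, (∑ j, μ j * u j a) * (∑ j, ν j * u j a)
      = ∑ j, ∑ i, (μ j * ν i) * (u j a * u i a) := by
    intro a
    rw [Finset.sum_mul_sum]
    exact Finset.sum_congr rfl fun j _ => Finset.sum_congr rfl fun i _ => by ring
  simp_rw [key]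
  rw [Finset.sum_comm]
  refine Finset.sum_congr rfl fun j _ => ?_
  rw [Finset.sum_comm]
  have : ∀ i : Fin n, ∑ a, (μ j * ν i) * (u j a * u i a)
      = (μ j * ν i) * (if j = i then (1:ℝ) else 0) := by
    intro i
    rw [← Finset.mul_sum, hu j i]
  simp_rw [this]
  simp [Finset.sum_ite_eq, mul_ite]

private lemma l2_triangle {ι : Type*} [Fintype ι] (f g : ι → ℝ) :
    Real.sqrt (∑ i, (f i + g i) ^ 2)
      ≤ Real.sqrt (∑ i, f i ^ 2) + Real.sqrt (∑ i, g i ^ 2) := by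
  have hf : (0:ℝ) ≤ ∑ i, f i ^ 2 := Finset.sum_nonneg fun i _ => sq_nonneg _
  have hg : (0:ℝ) ≤ ∑ i, g i ^ 2 := Finset.sum_nonneg fun i _ => sq_nonneg _
  have cs : ∑ i, f i * g i ≤ Real.sqrt (∑ i, f i ^ 2) * Real.sqrt (∑ i, g i ^ 2) := by
    calc ∑ i, f i * g i ≤ Real.sqrt ((∑ i, f i * g i) ^ 2) := by
          rw [Real.sqrt_sq_eq_abs]; exact le_abs_self _
      _ ≤ Real.sqrt ((∑ i, f i ^ 2) * ∑ i, g i ^ 2) :=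
          Real.sqrt_le_sqrt (Finset.sum_mul_sq_le_sq_mul_sq _ _ _)
      _ = _ := Real.sqrt_mul hf _
  have expand : ∑ i, (f i + g i) ^ 2
      = (∑ i, f i ^ 2) + 2 * (∑ i, f i * g i) + ∑ i, g i ^ 2 := by
    simp_rw [add_sq]
    rw [Finset.sum_add_distrib, Finset.sum_add_distrib]
    congr 1
    · congr 1
      simp_rw [mul_assoc]
      rw [← Finset.mul_sum]
  have h1 : ∑ i, (f i + g i) ^ 2
      ≤ (Real.sqrt (∑ i, f i ^ 2) + Real.sqrt (∑ i, g i ^ 2)) ^ 2 := by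
    rw [expand, add_sq, Real.sq_sqrt hf, Real.sq_sqrt hg]
    nlinarith [cs]
  calc Real.sqrt (∑ i, (f i + g i) ^ 2)
      ≤ Real.sqrt ((Real.sqrt (∑ i, f i ^ 2) + Real.sqrt (∑ i, g i ^ 2)) ^ 2) :=
        Real.sqrt_le_sqrt h1
    _ = _ := Real.sqrt_sq (by positivity)

private lemma sqrt_add_le' {a b : ℝ} (ha : 0 ≤ a) (hb : 0 ≤ b) :
    Real.sqrt (a + b) ≤ Real.sqrt a + Real.sqrt b := by
  have h : a + b ≤ (Real.sqrt a + Real.sqrt b) ^ 2 := by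
    rw [add_sq, Real.sq_sqrt ha, Real.sq_sqrt hb]
    nlinarith [Real.sqrt_nonneg a, Real.sqrt_nonneg b]
  calc Real.sqrt (a + b) ≤ Real.sqrt ((Real.sqrt a + Real.sqrt b) ^ 2) := Real.sqrt_le_sqrt h
    _ = _ := Real.sqrt_sq (by positivity)

section OrthonormalHelpers
variable {n : ℕ} (u : Fin n → Fin n → ℝ)

private lemma cols_on
    (hu : ∀ i j : Fin n, ∑ a, u i a * u j a = if i = j then 1 else 0) :
    ∀ a b : Fin n, ∑ j, u j a * u j b = if a = b then 1 else 0 := by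
  have hU : (Matrix.of u) * (Matrix.of u)ᵀ = 1 := by
    ext i j
    simpa [Matrix.mul_apply, Matrix.one_apply] using hu i j
  have hU' : (Matrix.of u)ᵀ * (Matrix.of u) = 1 := mul_eq_one_comm.mp hU
  intro a b
  have := congrFun (congrFun hU' a) b
  simpa [Matrix.mul_apply, Matrix.one_apply] using this

private lemma expand_vec
    (hu' : ∀ a b : Fin n, ∑ j, u j a * u j b = if a = b then 1 else 0)
    (v : Fin n → ℝ) (a : Fin n) : v a = ∑ j, (∑ b, u j b * v b) * u j a := by
  have h : ∑ j, (∑ b, u j b * v b) * u j a = ∑ b, (∑ j, u j b * u j a) * v b := by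
    simp_rw [Finset.sum_mul]
    rw [Finset.sum_comm]
    exact Finset.sum_congr rfl fun b _ => Finset.sum_congr rfl fun j _ => by ring
  rw [h]
  simp_rw [hu']
  simp

private lemma coeff_of
    (hu : ∀ i j : Fin n, ∑ a, u i a * u j a = if i = j then 1 else 0)
    (μ : Fin n → ℝ) (i : Fin n) :
    ∑ b, u i b * (∑ j, μ j * u j b) = μ i := by
  have h : ∑ b, u i b * (∑ j, μ j * u j b) = ∑ j, μ j * ∑ b, u i b * u j b := by
    simp_rw [Finset.mul_sum]
    rw [Finset.sum_comm]
    exact Finset.sum_congr rfl fun j _ => Finset.sum_congr rfl fun b _ => by ring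
  rw [h]
  simp_rw [hu i]
  simp

private lemma diag_act
    (hu : ∀ i j : Fin n, ∑ a, u i a * u j a = if i = j then 1 else 0)
    (D : Matrix (Fin n) (Fin n) ℝ) (ev : Fin n → ℝ)
    (hD : ∀ a b, D a b = ∑ j, ev j * u j a * u j b)
    (μ : Fin n → ℝ) (a : Fin n) :
    D.mulVec (fun b => ∑ j, μ j * u j b) a = ∑ j, (ev j * μ j) * u j a := by
  show ∑ b, D a b * (∑ j, μ j * u j b) = _
  simp_rw [hD]
  have step : ∑ b, (∑ j, ev j * u j a * u j b) * (∑ j, μ j * u j b)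
      = ∑ j, (ev j * u j a) * ∑ b, u j b * (∑ i, μ i * u i b) := by
    simp_rw [Finset.sum_mul, Finset.mul_sum]
    rw [Finset.sum_comm]
    exact Finset.sum_congr rfl fun j _ => Finset.sum_congr rfl fun b _ =>
      Finset.sum_congr rfl fun i _ => by ring
  rw [step]
  simp_rw [coeff_of u hu μ]
  exact Finset.sum_congr rfl fun j _ => by ring

private lemma pow_act
    (hu : ∀ i j : Fin n, ∑ a, u i a * u j a = if i = j then 1 else 0)
    (lam : Fin n → ℝ) (A : Matrix (Fin n) (Fin n) ℝ)
    (hAdef : ∀ a b, A a b = ∑ j, lam j * u j a * u j b) :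
    ∀ (t : ℕ) (μ : Fin n → ℝ) (a : Fin n),
      (A ^ t).mulVec (fun b => ∑ j, μ j * u j b) a = ∑ j, (lam j ^ t * μ j) * u j a := by
  intro t
  induction t with
  | zero => intro μ a; simp [Matrix.one_mulVec]
  | succ t ih =>
    intro μ a
    rw [pow_succ', ← Matrix.mulVec_mulVec]
    have hfun : (A ^ t).mulVec (fun b => ∑ j, μ j * u j b)
        = fun b => ∑ j, (lam j ^ t * μ j) * u j b := funext fun b => ih μ b
    rw [hfun, diag_act u hu A lam hAdef (fun j => lam j ^ t * μ j) a]
    exact Finset.sum_congr rfl fun j _ => by ring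

end OrthonormalHelpers

/-- Theorem 5.2, bound (5.6), deterministic form. Space-time nodes are
pairs `q = (t,i)`, `(π_{A,T}(x))(q) = (A^{q.1} x)(q.2)`, `(Φ v)_i = d_i v(s(i))` and
`(D e)_i = d_i e_i`, `A = Σ_j λ_j u_j u_jᵀ`, `G = Σ_j g(σ_j) u_j u_jᵀ`.  With the
0-based indexing, `λ_k, σ_k` are `lam ⟨k-1⟩, sig ⟨k-1⟩` and `λ_{k+1}, σ_{k+1}` are
`lam ⟨k⟩, sig ⟨k⟩`.  If `x*` minimizes
`x̃ ↦ ‖Φπ_{A,T}(x̃) − Dy‖₂² + γ x̃ᵀGx̃` over `ℝ^n`, and `α*` is the orthogonal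
projection of `x*` onto `span{u_1,…,u_k}`, then
`‖α* − x‖₂ ≤ (1/(√(1-δ) f_T(λ_k)))·(2 + M_max f_T(λ_{k+1})/√(γ g(σ_{k+1})))·‖De‖₂
 + (1/(√(1-δ) f_T(λ_k)))·(M_max f_T(λ_{k+1})√(g(σ_k)/g(σ_{k+1})) + √(γ g(σ_k)))·‖x‖₂`. -/
theorem stmt14 (n k T M : ℕ) (hn : 0 < n) (hk : 0 < k) (hT : 0 < T) (hkn : k < n)
    (hM : 0 < M)
    (u : Fin n → Fin n → ℝ)
    (hu : ∀ i j : Fin n, ∑ a, u i a * u j a = if i = j then 1 else 0)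
    (lam : Fin n → ℝ)
    (hmono : ∀ i j : Fin n, i ≤ j → lam j ≤ lam i)
    (hnn : ∀ j, 0 ≤ lam j)
    (sig : Fin n → ℝ) (hsig : ∀ i j : Fin n, i ≤ j → sig i ≤ sig j)
    (A : Matrix (Fin n) (Fin n) ℝ)
    (hAdef : ∀ a b, A a b = ∑ j, lam j * u j a * u j b)
    (g : ℝ → ℝ) (hg0 : ∀ j, 0 ≤ g (sig j))
    (hgmono : ∀ i j : Fin n, i ≤ j → g (sig i) ≤ g (sig j))
    (hgk1 : 0 < g (sig ⟨k, hkn⟩))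
    (G : Matrix (Fin n) (Fin n) ℝ)
    (hGdef : ∀ a b, G a b = ∑ j, g (sig j) * u j a * u j b)
    (s : Fin M → Fin T × Fin n) (d : Fin M → ℝ) (hd : ∀ i, 0 < d i)
    (γ : ℝ) (hγ : 0 < γ) (δ : ℝ) (hδ0 : 0 < δ) (hδ1 : δ < 1)
    (Mmax : ℝ) (hMmax : 0 < Mmax)
    (hMbd : ∀ v : Fin T × Fin n → ℝ,
      Real.sqrt (∑ i, (d i * v (s i)) ^ 2) ≤ Mmax * Real.sqrt (∑ q, v q ^ 2))
    (hframe : ∀ v ∈ Submodule.span ℝ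
        (Set.range fun j : Fin k => u (Fin.castLE hkn.le j)),
      Real.sqrt (1 - δ) * fT T (lam ⟨k - 1, by omega⟩) * Real.sqrt (∑ a, v a ^ 2)
        ≤ Real.sqrt (∑ i, (d i * ((A ^ ((s i).1 : ℕ)).mulVec v) (s i).2) ^ 2))
    (x : Fin n → ℝ)
    (hx : x ∈ Submodule.span ℝ (Set.range fun j : Fin k => u (Fin.castLE hkn.le j)))
    (e : Fin M → ℝ) (y : Fin M → ℝ)
    (hy : ∀ i, y i = ((A ^ ((s i).1 : ℕ)).mulVec x) (s i).2 + e i)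
    (xstar : Fin n → ℝ)
    (hmin : ∀ z : Fin n → ℝ,
      (∑ i, (d i * ((A ^ ((s i).1 : ℕ)).mulVec xstar) (s i).2 - d i * y i) ^ 2)
          + γ * ∑ a, xstar a * G.mulVec xstar a
        ≤ (∑ i, (d i * ((A ^ ((s i).1 : ℕ)).mulVec z) (s i).2 - d i * y i) ^ 2)
          + γ * ∑ a, z a * G.mulVec z a)
    (αstar : Fin n → ℝ)
    (hα : ∀ a, αstar a = ∑ j : Fin k,
      (∑ b, u (Fin.castLE hkn.le j) b * xstar b) * u (Fin.castLE hkn.le j) a) :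
    Real.sqrt (∑ a, (αstar a - x a) ^ 2)
      ≤ 1 / (Real.sqrt (1 - δ) * fT T (lam ⟨k - 1, by omega⟩))
          * (2 + Mmax * fT T (lam ⟨k, hkn⟩) / Real.sqrt (γ * g (sig ⟨k, hkn⟩)))
          * Real.sqrt (∑ i, (d i * e i) ^ 2)
        + 1 / (Real.sqrt (1 - δ) * fT T (lam ⟨k - 1, by omega⟩))
          * (Mmax * fT T (lam ⟨k, hkn⟩)
              * Real.sqrt (g (sig ⟨k - 1, by omega⟩) / g (sig ⟨k, hkn⟩))
            + Real.sqrt (γ * g (sig ⟨k - 1, by omega⟩)))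
          * Real.sqrt (∑ a, x a ^ 2) := by
  classical
  have hk1n : k - 1 < n := by omega
  have hu' := cols_on u hu
  -- coefficients of xstar
  set c : Fin n → ℝ := fun j => ∑ b, u j b * xstar b with hcdef
  set μ : Fin n → ℝ := fun j => if (j : ℕ) < k then c j else 0 with hμdef
  set ν : Fin n → ℝ := fun j => if (j : ℕ) < k then 0 else c j with hνdef
  have hxstar_rep : ∀ a, xstar a = ∑ j, c j * u j a := fun a => expand_vec u hu' xstar a
  have hα_rep : ∀ a, αstar a = ∑ j, μ j * u j a := by
    intro a
    have h1 : ∑ j : Fin k, c (Fin.castLE hkn.le j) * u (Fin.castLE hkn.le j) a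
        = ∑ j : Fin n, if (j : ℕ) < k then c j * u j a else 0 :=
      sum_castLE' hkn.le (fun j => c j * u j a)
    calc αstar a = ∑ j : Fin k, c (Fin.castLE hkn.le j) * u (Fin.castLE hkn.le j) a := hα a
      _ = ∑ j : Fin n, if (j : ℕ) < k then c j * u j a else 0 := h1
      _ = ∑ j, μ j * u j a := by
          refine Finset.sum_congr rfl fun j _ => ?_
          by_cases h : (j : ℕ) < k <;> simp [hμdef, h]
  set β : Fin n → ℝ := fun a => xstar a - αstar a with hβdef
  have hβ_rep : ∀ a, β a = ∑ j, ν j * u j a := by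
    intro a
    show xstar a - αstar a = _
    rw [hxstar_rep a, hα_rep a, ← Finset.sum_sub_distrib]
    refine Finset.sum_congr rfl fun j _ => ?_
    by_cases h : (j : ℕ) < k <;> simp [hμdef, hνdef, h]
  -- coefficients of x
  rw [Submodule.mem_span_range_iff_exists_fun] at hx
  obtain ⟨τ, hτ⟩ := hx
  set ξ : Fin n → ℝ := fun j => if h : (j : ℕ) < k then τ ⟨(j : ℕ), h⟩ else 0 with hξdef
  have hx_rep : ∀ a, x a = ∑ j, ξ j * u j a := by
    intro a
    have h2 : ∑ j : Fin k, ξ (Fin.castLE hkn.le j) * u (Fin.castLE hkn.le j) a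
        = ∑ j : Fin n, if (j : ℕ) < k then ξ j * u j a else 0 :=
      sum_castLE' hkn.le (fun j => ξ j * u j a)
    have h3 : ∀ j : Fin k, ξ (Fin.castLE hkn.le j) = τ j := by
      intro j
      simp [hξdef, Fin.castLE]
    calc x a = ∑ j : Fin k, τ j * u (Fin.castLE hkn.le j) a := by
          rw [← hτ]; simp [Finset.sum_apply]
      _ = ∑ j : Fin k, ξ (Fin.castLE hkn.le j) * u (Fin.castLE hkn.le j) a :=
          Finset.sum_congr rfl fun j _ => by rw [h3 j]
      _ = ∑ j : Fin n, if (j : ℕ) < k then ξ j * u j a else 0 := h2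
      _ = ∑ j, ξ j * u j a := by
          refine Finset.sum_congr rfl fun j _ => ?_
          by_cases h : (j : ℕ) < k
          · simp [h]
          · simp [h, hξdef]
  -- membership of αstar - x in the span
  have hmem : (fun a => αstar a - x a) ∈ Submodule.span ℝ
      (Set.range fun j : Fin k => u (Fin.castLE hkn.le j)) := by
    rw [Submodule.mem_span_range_iff_exists_fun]
    refine ⟨fun j => c (Fin.castLE hkn.le j) - τ j, ?_⟩
    funext a
    simp only [Finset.sum_apply, Pi.smul_apply, smul_eq_mul, sub_mul]
    rw [Finset.sum_sub_distrib]
    have hxa : ∑ j : Fin k, τ j * u (Fin.castLE hkn.le j) a = x a := by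
      rw [← hτ]; simp [Finset.sum_apply]
    rw [hxa]
    have hαa : ∑ j : Fin k, c (Fin.castLE hkn.le j) * u (Fin.castLE hkn.le j) a = αstar a :=
      (hα a).symm
    rw [hαa]
  -- frame bound
  have hframe' := hframe (fun a => αstar a - x a) hmem
  -- pointwise decomposition of observations of αstar - x
  have keyP : ∀ i : Fin M,
      d i * ((A ^ ((s i).1 : ℕ)).mulVec (fun a => αstar a - x a)) (s i).2
        = (d i * ((A ^ ((s i).1 : ℕ)).mulVec xstar) (s i).2 - d i * y i)
          + (d i * e i + -(d i * ((A ^ ((s i).1 : ℕ)).mulVec β) (s i).2)) := by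
    intro i
    have hdecomp : (fun a => αstar a - x a) = xstar - x - β := by
      funext a
      simp only [Pi.sub_apply, hβdef]
      ring
    rw [hdecomp, Matrix.mulVec_sub, Matrix.mulVec_sub]
    simp only [Pi.sub_apply]
    rw [hy i]
    ring
  -- triangle inequality chain
  have htri : Real.sqrt (∑ i, (d i * ((A ^ ((s i).1 : ℕ)).mulVec (fun a => αstar a - x a)) (s i).2) ^ 2)
      ≤ Real.sqrt (∑ i, (d i * ((A ^ ((s i).1 : ℕ)).mulVec xstar) (s i).2 - d i * y i) ^ 2)
        + (Real.sqrt (∑ i, (d i * e i) ^ 2)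
          + Real.sqrt (∑ i, (d i * ((A ^ ((s i).1 : ℕ)).mulVec β) (s i).2) ^ 2)) := by
    have t1 := l2_triangle
      (fun i => d i * ((A ^ ((s i).1 : ℕ)).mulVec xstar) (s i).2 - d i * y i)
      (fun i => d i * e i + -(d i * ((A ^ ((s i).1 : ℕ)).mulVec β) (s i).2))
    have t2 := l2_triangle (fun i => d i * e i)
      (fun i => -(d i * ((A ^ ((s i).1 : ℕ)).mulVec β) (s i).2))
    simp only [neg_sq] at t2
    simp only [keyP]
    exact le_trans t1 (by linarith)
  -- bound on the sampled tail
  have hπβ : Real.sqrt (∑ i, (d i * ((A ^ ((s i).1 : ℕ)).mulVec β) (s i).2) ^ 2)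
      ≤ Mmax * Real.sqrt (∑ q : Fin T × Fin n, (((A ^ (q.1 : ℕ)).mulVec β) q.2) ^ 2) :=
    hMbd (fun q => ((A ^ (q.1 : ℕ)).mulVec β) q.2)
  have hβfun : β = fun b => ∑ j, ν j * u j b := funext hβ_rep
  have hVsq : ∑ q : Fin T × Fin n, (((A ^ (q.1 : ℕ)).mulVec β) q.2) ^ 2
      ≤ (∑ t ∈ Finset.range T, lam ⟨k, hkn⟩ ^ (2 * t)) * ∑ j, ν j ^ 2 := by
    rw [Fintype.sum_prod_type]
    have hrow : ∀ t : Fin T, ∑ i, (((A ^ (t : ℕ)).mulVec β) i) ^ 2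
        = ∑ j, (lam j ^ (t : ℕ) * ν j) ^ 2 := by
      intro t
      have h1 : ∀ i : Fin n, ((A ^ (t : ℕ)).mulVec β) i
          = ∑ j, (lam j ^ (t : ℕ) * ν j) * u j i := by
        intro i
        rw [hβfun]
        exact pow_act u hu lam A hAdef (t : ℕ) ν i
      calc ∑ i, (((A ^ (t : ℕ)).mulVec β) i) ^ 2
          = ∑ i, (∑ j, (lam j ^ (t : ℕ) * ν j) * u j i)
              * (∑ j, (lam j ^ (t : ℕ) * ν j) * u j i) := by
            refine Finset.sum_congr rfl fun i _ => ?_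
            rw [sq, h1 i]
        _ = ∑ j, (lam j ^ (t : ℕ) * ν j) * (lam j ^ (t : ℕ) * ν j) :=
            ip_expand u hu _ _
        _ = ∑ j, (lam j ^ (t : ℕ) * ν j) ^ 2 := by
            refine Finset.sum_congr rfl fun j _ => (sq _).symm
    calc ∑ t : Fin T, ∑ i, (((A ^ (t : ℕ)).mulVec β) i) ^ 2
        = ∑ t : Fin T, ∑ j, (lam j ^ (t : ℕ) * ν j) ^ 2 :=
          Finset.sum_congr rfl fun t _ => hrow t
      _ ≤ ∑ t : Fin T, ∑ j, lam ⟨k, hkn⟩ ^ (2 * (t : ℕ)) * ν j ^ 2 := by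
          refine Finset.sum_le_sum fun t _ => Finset.sum_le_sum fun j _ => ?_
          by_cases hj : (j : ℕ) < k
          · simp [hνdef, hj]
          · have hle : lam j ≤ lam ⟨k, hkn⟩ :=
              hmono ⟨k, hkn⟩ j (by rw [Fin.le_def]; simpa using Nat.le_of_not_lt hj)
            have hp : (lam j ^ (t : ℕ)) ^ 2 ≤ (lam ⟨k, hkn⟩ ^ (t : ℕ)) ^ 2 :=
              pow_le_pow_left₀ (pow_nonneg (hnn j) _) (pow_le_pow_left₀ (hnn j) hle _) 2
            calc (lam j ^ (t : ℕ) * ν j) ^ 2 = (lam j ^ (t : ℕ)) ^ 2 * ν j ^ 2 := by ring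
              _ ≤ (lam ⟨k, hkn⟩ ^ (t : ℕ)) ^ 2 * ν j ^ 2 := by
                  nlinarith [sq_nonneg (ν j)]
              _ = lam ⟨k, hkn⟩ ^ (2 * (t : ℕ)) * ν j ^ 2 := by
                  rw [← pow_mul, Nat.mul_comm]
      _ = (∑ t : Fin T, lam ⟨k, hkn⟩ ^ (2 * (t : ℕ))) * ∑ j, ν j ^ 2 := by
          rw [Finset.sum_mul]
          exact Finset.sum_congr rfl fun t _ => (Finset.mul_sum _ _ _).symm
      _ = (∑ t ∈ Finset.range T, lam ⟨k, hkn⟩ ^ (2 * t)) * ∑ j, ν j ^ 2 := by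
          rw [Fin.sum_univ_eq_sum_range (fun t => lam ⟨k, hkn⟩ ^ (2 * t)) T]
  -- quadratic forms
  have hGx : ∀ a, G.mulVec x a = ∑ j, (g (sig j) * ξ j) * u j a := by
    intro a
    have hxfun : x = fun b => ∑ j, ξ j * u j b := funext hx_rep
    calc G.mulVec x a = G.mulVec (fun b => ∑ j, ξ j * u j b) a := by rw [← hxfun]
      _ = _ := diag_act u hu G (fun j => g (sig j)) hGdef ξ a
  have hQx : ∑ a, x a * G.mulVec x a = ∑ j, g (sig j) * ξ j ^ 2 := by
    calc ∑ a, x a * G.mulVec x a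
        = ∑ a, (∑ j, ξ j * u j a) * (∑ j, (g (sig j) * ξ j) * u j a) := by
          refine Finset.sum_congr rfl fun a _ => ?_
          rw [hx_rep a, hGx a]
      _ = ∑ j, ξ j * (g (sig j) * ξ j) := ip_expand u hu _ _
      _ = ∑ j, g (sig j) * ξ j ^ 2 := Finset.sum_congr rfl fun j _ => by ring
  have hGxs : ∀ a, G.mulVec xstar a = ∑ j, (g (sig j) * c j) * u j a := by
    intro a
    have hxsfun : xstar = fun b => ∑ j, c j * u j b := funext hxstar_rep
    calc G.mulVec xstar a = G.mulVec (fun b => ∑ j, c j * u j b) a := by rw [← hxsfun]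
      _ = _ := diag_act u hu G (fun j => g (sig j)) hGdef c a
  have hQs : ∑ a, xstar a * G.mulVec xstar a = ∑ j, g (sig j) * c j ^ 2 := by
    calc ∑ a, xstar a * G.mulVec xstar a
        = ∑ a, (∑ j, c j * u j a) * (∑ j, (g (sig j) * c j) * u j a) := by
          refine Finset.sum_congr rfl fun a _ => ?_
          rw [hxstar_rep a, hGxs a]
      _ = ∑ j, c j * (g (sig j) * c j) := ip_expand u hu _ _
      _ = ∑ j, g (sig j) * c j ^ 2 := Finset.sum_congr rfl fun j _ => by ring
  have hXsq : ∑ a, x a ^ 2 = ∑ j, ξ j ^ 2 := by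
    calc ∑ a, x a ^ 2 = ∑ a, (∑ j, ξ j * u j a) * (∑ j, ξ j * u j a) := by
          refine Finset.sum_congr rfl fun a _ => ?_
          rw [sq, hx_rep a]
      _ = ∑ j, ξ j * ξ j := ip_expand u hu _ _
      _ = ∑ j, ξ j ^ 2 := Finset.sum_congr rfl fun j _ => (sq _).symm
  have hQx_le : ∑ j, g (sig j) * ξ j ^ 2 ≤ g (sig ⟨k - 1, hk1n⟩) * ∑ j, ξ j ^ 2 := by
    rw [Finset.mul_sum]
    refine Finset.sum_le_sum fun j _ => ?_
    by_cases hj : (j : ℕ) < k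
    · have hgle : g (sig j) ≤ g (sig ⟨k - 1, hk1n⟩) :=
        hgmono j ⟨k - 1, hk1n⟩ (by rw [Fin.le_def]; simp; omega)
      nlinarith [sq_nonneg (ξ j), hg0 j]
    · simp [hξdef, hj]
  have hQs_ge : g (sig ⟨k, hkn⟩) * ∑ j, ν j ^ 2 ≤ ∑ j, g (sig j) * c j ^ 2 := by
    rw [Finset.mul_sum]
    refine Finset.sum_le_sum fun j _ => ?_
    by_cases hj : (j : ℕ) < k
    · simp only [hνdef, hj, if_pos]
      simpa using mul_nonneg (hg0 j) (sq_nonneg (c j))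
    · have h1 : g (sig ⟨k, hkn⟩) ≤ g (sig j) :=
        hgmono ⟨k, hkn⟩ j (by rw [Fin.le_def]; simpa using Nat.le_of_not_lt hj)
      have h2 : ν j = c j := by simp [hνdef, hj]
      rw [h2]
      nlinarith [sq_nonneg (c j)]
  -- the key minimization inequality
  have key : (∑ i, (d i * ((A ^ ((s i).1 : ℕ)).mulVec xstar) (s i).2 - d i * y i) ^ 2)
      + γ * (g (sig ⟨k, hkn⟩) * ∑ j, ν j ^ 2)
      ≤ (∑ i, (d i * e i) ^ 2) + γ * (g (sig ⟨k - 1, hk1n⟩) * ∑ a, x a ^ 2) := by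
    have h1 := hmin x
    have hres : ∑ i, (d i * ((A ^ ((s i).1 : ℕ)).mulVec x) (s i).2 - d i * y i) ^ 2
        = ∑ i, (d i * e i) ^ 2 := by
      refine Finset.sum_congr rfl fun i _ => ?_
      rw [hy i]
      ring
    rw [hres, hQs, hQx] at h1
    have h2 : γ * (g (sig ⟨k, hkn⟩) * ∑ j, ν j ^ 2) ≤ γ * ∑ j, g (sig j) * c j ^ 2 :=
      mul_le_mul_of_nonneg_left hQs_ge hγ.le
    have h3 : γ * ∑ j, g (sig j) * ξ j ^ 2 ≤ γ * (g (sig ⟨k - 1, hk1n⟩) * ∑ a, x a ^ 2) := by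
      rw [hXsq]
      exact mul_le_mul_of_nonneg_left hQx_le hγ.le
    linarith
  -- ENDGAME
  have hEnn : (0:ℝ) ≤ ∑ i, (d i * e i) ^ 2 := Finset.sum_nonneg fun i _ => sq_nonneg _
  have hXnn : (0:ℝ) ≤ ∑ a, x a ^ 2 := Finset.sum_nonneg fun a _ => sq_nonneg _
  have hBnn : (0:ℝ) ≤ ∑ j, ν j ^ 2 := Finset.sum_nonneg fun j _ => sq_nonneg _
  have hRnn : (0:ℝ) ≤ ∑ i, (d i * ((A ^ ((s i).1 : ℕ)).mulVec xstar) (s i).2 - d i * y i) ^ 2 :=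
    Finset.sum_nonneg fun i _ => sq_nonneg _
  have hγgk1 : (0:ℝ) < Real.sqrt (γ * g (sig ⟨k, hkn⟩)) := Real.sqrt_pos.mpr (by positivity)
  have hγgknn : (0:ℝ) ≤ γ * g (sig ⟨k - 1, hk1n⟩) := mul_nonneg hγ.le (hg0 _)
  have hsplit : Real.sqrt ((∑ i, (d i * e i) ^ 2) + γ * (g (sig ⟨k - 1, hk1n⟩) * ∑ a, x a ^ 2))
      ≤ Real.sqrt (∑ i, (d i * e i) ^ 2)
        + Real.sqrt (γ * g (sig ⟨k - 1, hk1n⟩)) * Real.sqrt (∑ a, x a ^ 2) := by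
    have h2 : Real.sqrt (γ * (g (sig ⟨k - 1, hk1n⟩) * ∑ a, x a ^ 2))
        = Real.sqrt (γ * g (sig ⟨k - 1, hk1n⟩)) * Real.sqrt (∑ a, x a ^ 2) := by
      rw [← mul_assoc, Real.sqrt_mul hγgknn]
    calc Real.sqrt ((∑ i, (d i * e i) ^ 2) + γ * (g (sig ⟨k - 1, hk1n⟩) * ∑ a, x a ^ 2))
        ≤ Real.sqrt (∑ i, (d i * e i) ^ 2)
            + Real.sqrt (γ * (g (sig ⟨k - 1, hk1n⟩) * ∑ a, x a ^ 2)) :=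
          sqrt_add_le' hEnn (mul_nonneg hγ.le (mul_nonneg (hg0 _) hXnn))
      _ = _ := by rw [h2]
  have hRle : Real.sqrt (∑ i, (d i * ((A ^ ((s i).1 : ℕ)).mulVec xstar) (s i).2 - d i * y i) ^ 2)
      ≤ Real.sqrt (∑ i, (d i * e i) ^ 2)
        + Real.sqrt (γ * g (sig ⟨k - 1, hk1n⟩)) * Real.sqrt (∑ a, x a ^ 2) := by
    refine le_trans (Real.sqrt_le_sqrt ?_) hsplit
    have h0 : (0:ℝ) ≤ γ * (g (sig ⟨k, hkn⟩) * ∑ j, ν j ^ 2) :=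
      mul_nonneg hγ.le (mul_nonneg hgk1.le hBnn)
    linarith [key]
  have hBqle : Real.sqrt (∑ j, ν j ^ 2)
      ≤ (Real.sqrt (∑ i, (d i * e i) ^ 2)
          + Real.sqrt (γ * g (sig ⟨k - 1, hk1n⟩)) * Real.sqrt (∑ a, x a ^ 2))
        / Real.sqrt (γ * g (sig ⟨k, hkn⟩)) := by
    rw [le_div_iff₀ hγgk1]
    calc Real.sqrt (∑ j, ν j ^ 2) * Real.sqrt (γ * g (sig ⟨k, hkn⟩))
        = Real.sqrt (γ * g (sig ⟨k, hkn⟩) * ∑ j, ν j ^ 2) := by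
          rw [Real.sqrt_mul (show (0:ℝ) ≤ γ * g (sig ⟨k, hkn⟩) by positivity) (∑ j, ν j ^ 2)]
          exact mul_comm _ _
      _ ≤ Real.sqrt ((∑ i, (d i * e i) ^ 2)
            + γ * (g (sig ⟨k - 1, hk1n⟩) * ∑ a, x a ^ 2)) := by
          refine Real.sqrt_le_sqrt ?_
          have h5 : γ * g (sig ⟨k, hkn⟩) * ∑ j, ν j ^ 2
              = γ * (g (sig ⟨k, hkn⟩) * ∑ j, ν j ^ 2) := by ring
          rw [h5]
          linarith [key, hRnn]
      _ ≤ _ := hsplit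
  have hVF1 : Real.sqrt (∑ q : Fin T × Fin n, (((A ^ (q.1 : ℕ)).mulVec β) q.2) ^ 2)
      ≤ fT T (lam ⟨k, hkn⟩) * Real.sqrt (∑ j, ν j ^ 2) := by
    refine le_trans (Real.sqrt_le_sqrt hVsq) (le_of_eq ?_)
    rw [Real.sqrt_mul (Finset.sum_nonneg fun t _ => pow_nonneg (hnn _) _)]
    simp only [fT]
  have hF1nn : 0 ≤ fT T (lam ⟨k, hkn⟩) := fT_nonneg _ _
  have hMF1 : 0 ≤ Mmax * fT T (lam ⟨k, hkn⟩) := mul_nonneg hMmax.le hF1nn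
  have hPB : Real.sqrt (∑ i, (d i * ((A ^ ((s i).1 : ℕ)).mulVec β) (s i).2) ^ 2)
      ≤ Mmax * fT T (lam ⟨k, hkn⟩) * Real.sqrt (∑ j, ν j ^ 2) := by
    refine le_trans hπβ ?_
    rw [mul_assoc]
    exact mul_le_mul_of_nonneg_left hVF1 hMmax.le
  have htail : Mmax * fT T (lam ⟨k, hkn⟩) * Real.sqrt (∑ j, ν j ^ 2)
      ≤ Mmax * fT T (lam ⟨k, hkn⟩)
        * ((Real.sqrt (∑ i, (d i * e i) ^ 2)
            + Real.sqrt (γ * g (sig ⟨k - 1, hk1n⟩)) * Real.sqrt (∑ a, x a ^ 2))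
          / Real.sqrt (γ * g (sig ⟨k, hkn⟩))) :=
    mul_le_mul_of_nonneg_left hBqle hMF1
  have hc0 : 0 < Real.sqrt (1 - δ) * fT T (lam ⟨k - 1, hk1n⟩) :=
    mul_pos (Real.sqrt_pos.mpr (by linarith)) (fT_pos hT (hnn _))
  have hmain : Real.sqrt (1 - δ) * fT T (lam ⟨k - 1, hk1n⟩)
        * Real.sqrt (∑ a, (αstar a - x a) ^ 2)
      ≤ (2 + Mmax * fT T (lam ⟨k, hkn⟩) / Real.sqrt (γ * g (sig ⟨k, hkn⟩)))
          * Real.sqrt (∑ i, (d i * e i) ^ 2)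
        + (Mmax * fT T (lam ⟨k, hkn⟩)
            * (Real.sqrt (γ * g (sig ⟨k - 1, hk1n⟩)) / Real.sqrt (γ * g (sig ⟨k, hkn⟩)))
          + Real.sqrt (γ * g (sig ⟨k - 1, hk1n⟩))) * Real.sqrt (∑ a, x a ^ 2) := by
    have hchain := le_trans hframe' htri
    have hident : Mmax * fT T (lam ⟨k, hkn⟩)
        * ((Real.sqrt (∑ i, (d i * e i) ^ 2)
            + Real.sqrt (γ * g (sig ⟨k - 1, hk1n⟩)) * Real.sqrt (∑ a, x a ^ 2))
          / Real.sqrt (γ * g (sig ⟨k, hkn⟩)))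
        = (Mmax * fT T (lam ⟨k, hkn⟩) / Real.sqrt (γ * g (sig ⟨k, hkn⟩)))
            * Real.sqrt (∑ i, (d i * e i) ^ 2)
          + (Mmax * fT T (lam ⟨k, hkn⟩)
              * (Real.sqrt (γ * g (sig ⟨k - 1, hk1n⟩)) / Real.sqrt (γ * g (sig ⟨k, hkn⟩))))
            * Real.sqrt (∑ a, x a ^ 2) := by ring
    have h6 : Real.sqrt (∑ i, (d i * ((A ^ ((s i).1 : ℕ)).mulVec β) (s i).2) ^ 2)
        ≤ Mmax * fT T (lam ⟨k, hkn⟩)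
          * ((Real.sqrt (∑ i, (d i * e i) ^ 2)
              + Real.sqrt (γ * g (sig ⟨k - 1, hk1n⟩)) * Real.sqrt (∑ a, x a ^ 2))
            / Real.sqrt (γ * g (sig ⟨k, hkn⟩))) := le_trans hPB htail
    calc Real.sqrt (1 - δ) * fT T (lam ⟨k - 1, hk1n⟩)
          * Real.sqrt (∑ a, (αstar a - x a) ^ 2)
        ≤ Real.sqrt (∑ i, (d i * ((A ^ ((s i).1 : ℕ)).mulVec xstar) (s i).2 - d i * y i) ^ 2)
          + (Real.sqrt (∑ i, (d i * e i) ^ 2)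
            + Real.sqrt (∑ i, (d i * ((A ^ ((s i).1 : ℕ)).mulVec β) (s i).2) ^ 2)) := hchain
      _ ≤ (Real.sqrt (∑ i, (d i * e i) ^ 2)
            + Real.sqrt (γ * g (sig ⟨k - 1, hk1n⟩)) * Real.sqrt (∑ a, x a ^ 2))
          + (Real.sqrt (∑ i, (d i * e i) ^ 2)
            + Mmax * fT T (lam ⟨k, hkn⟩)
              * ((Real.sqrt (∑ i, (d i * e i) ^ 2)
                  + Real.sqrt (γ * g (sig ⟨k - 1, hk1n⟩)) * Real.sqrt (∑ a, x a ^ 2))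
                / Real.sqrt (γ * g (sig ⟨k, hkn⟩)))) :=
          add_le_add hRle (add_le_add le_rfl h6)
      _ = _ := by ring
  have hdivid : Real.sqrt (g (sig ⟨k - 1, hk1n⟩) / g (sig ⟨k, hkn⟩))
      = Real.sqrt (γ * g (sig ⟨k - 1, hk1n⟩)) / Real.sqrt (γ * g (sig ⟨k, hkn⟩)) := by
    rw [← Real.sqrt_div hγgknn]
    congr 1
    rw [mul_div_mul_left _ _ (ne_of_gt hγ)]
  rw [hdivid]
  have hfinal : Real.sqrt (∑ a, (αstar a - x a) ^ 2)
      ≤ ((2 + Mmax * fT T (lam ⟨k, hkn⟩) / Real.sqrt (γ * g (sig ⟨k, hkn⟩)))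
            * Real.sqrt (∑ i, (d i * e i) ^ 2)
          + (Mmax * fT T (lam ⟨k, hkn⟩)
              * (Real.sqrt (γ * g (sig ⟨k - 1, hk1n⟩)) / Real.sqrt (γ * g (sig ⟨k, hkn⟩)))
            + Real.sqrt (γ * g (sig ⟨k - 1, hk1n⟩))) * Real.sqrt (∑ a, x a ^ 2))
        / (Real.sqrt (1 - δ) * fT T (lam ⟨k - 1, hk1n⟩)) := by
    rw [le_div_iff₀ hc0, mul_comm]
    exact hmain
  refine le_trans hfinal (le_of_eq ?_)
  ring
end
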